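/- For every natural number n with n ≥ 12 and 4 ∣ n, the conjugation action of the alternating group alternatingGroup (Fin n) on the set of fixed-point-free involutions of Fin n (all of which are even permutations, and which form a single conjugacy class of the alternating group) is primitive: it is transitive and admits no invariant equivalence relation other than equality and the full relation. -/

import Mathlib

open Equiv Finset

namespace FPFPrim

variable {n : ℕ}

lemma sq_apply {u : Equiv.Perm (Fin n)} (h : u ^ 2 = 1) (p : Fin n) : u (u p) = p := by
  have h2 : u * u = 1 := by rwa [sq] at h
  have := congrArg (fun s : Equiv.Perm (Fin n) => s p) h2
  simpa [Equiv.Perm.mul_apply] using this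

lemma FPFPrim.conj_apply (g x : Equiv.Perm (Fin n)) (p : Fin n) :
    (g * x * g⁻¹) p = g (x (g⁻¹ p)) := by
  simp [Equiv.Perm.mul_apply]

/-- disagreement set -/
def Dset (x y : Equiv.Perm (Fin n)) : Finset (Fin n) :=
  Finset.univ.filter fun p => x p ≠ y p

lemma mem_Dset {x y : Equiv.Perm (Fin n)} {p : Fin n} : p ∈ Dset x y ↔ x p ≠ y p := by
  simp [Dset]

lemma not_mem_Dset {x y : Equiv.Perm (Fin n)} {p : Fin n} : p ∉ Dset x y ↔ x p = y p := by
  simp [Dset]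

lemma Dset_comm (x y : Equiv.Perm (Fin n)) : Dset x y = Dset y x := by
  ext p; simp [mem_Dset, ne_comm]

lemma exists_mem_Dset {x y : Equiv.Perm (Fin n)} (h : x ≠ y) : ∃ a, a ∈ Dset x y := by
  by_contra hc
  push_neg at hc
  exact h (Equiv.ext fun p => not_mem_Dset.mp (hc p))

lemma apply_mem_Dset {x y : Equiv.Perm (Fin n)} (hx2 : x ^ 2 = 1) (hy2 : y ^ 2 = 1)
    {a : Fin n} (ha : a ∈ Dset x y) : x a ∈ Dset x y := by
  rw [mem_Dset] at ha ⊢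
  intro h
  rw [sq_apply hx2] at h
  apply ha
  have := congrArg y h
  rw [sq_apply hy2] at this
  exact this.symm

lemma apply_mem_Dset' {x y : Equiv.Perm (Fin n)} (hx2 : x ^ 2 = 1) (hy2 : y ^ 2 = 1)
    {a : Fin n} (ha : a ∈ Dset x y) : y a ∈ Dset x y := by
  rw [Dset_comm] at ha ⊢
  exact apply_mem_Dset hy2 hx2 ha

/-- the four distinct points `a, x a, y a, x (y a)` attached to a disagreement point. -/
lemma abcd {x y : Equiv.Perm (Fin n)} (hx2 : x ^ 2 = 1) (hxf : ∀ p, x p ≠ p)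
    (hy2 : y ^ 2 = 1) (hyf : ∀ p, y p ≠ p) {a : Fin n} (ha : a ∈ Dset x y) :
    (x a ∈ Dset x y ∧ y a ∈ Dset x y ∧ x (y a) ∈ Dset x y) ∧
    (x a ≠ a ∧ y a ≠ a ∧ y a ≠ x a) ∧
    (x (y a) ≠ a ∧ x (y a) ≠ x a ∧ x (y a) ≠ y a) := by
  have hb := apply_mem_Dset hx2 hy2 ha
  have hc := apply_mem_Dset' hx2 hy2 ha
  have hd := apply_mem_Dset hx2 hy2 hc
  have hca : y a ≠ x a := Ne.symm (mem_Dset.mp ha)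
  have hda : x (y a) ≠ a := by
    intro h
    apply hca
    have := congrArg x h
    rwa [sq_apply hx2] at this
  refine ⟨⟨hb, hc, hd⟩, ⟨hxf a, hyf a, hca⟩, hda, fun h => hyf a (x.injective h), hxf _⟩

variable {n : ℕ}

lemma conj_sq {x g : Equiv.Perm (Fin n)} (hx2 : x ^ 2 = 1) : (g * x * g⁻¹) ^ 2 = 1 := by
  have h : g * x * g⁻¹ = (MulAut.conj g) x := rfl
  rw [h, ← map_pow, hx2, map_one]

lemma conj_fpf {x g : Equiv.Perm (Fin n)} (hxf : ∀ p, x p ≠ p) (p : Fin n) :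
    (g * x * g⁻¹) p ≠ p := by
  rw [FPFPrim.conj_apply]
  intro h
  have : x (g⁻¹ p) = g⁻¹ p := by
    have := congrArg (g⁻¹ : Equiv.Perm (Fin n)) h
    simpa using this
  exact hxf _ this

lemma ne_one_of_fpf {x : Equiv.Perm (Fin n)} (hn : 0 < n) (hxf : ∀ p, x p ≠ p) : x ≠ 1 := by
  intro h
  exact hxf ⟨0, hn⟩ (by rw [h]; rfl)

lemma swap_conj (g : Equiv.Perm (Fin n)) (p q : Fin n) :
    g * Equiv.swap p q * g⁻¹ = Equiv.swap (g p) (g q) :=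
  (Equiv.swap_apply_apply g p q).symm

/-- disjoint swaps commute -/
lemma swap_swap_comm {p q r s : Fin n} (hpr : p ≠ r) (hps : p ≠ s) (hqr : q ≠ r) (hqs : q ≠ s) :
    Equiv.swap p q * Equiv.swap r s = Equiv.swap r s * Equiv.swap p q := by
  refine Equiv.ext fun t => ?_
  simp only [Equiv.Perm.mul_apply]
  rcases eq_or_ne t p with rfl | htp
  · rw [Equiv.swap_apply_of_ne_of_ne hpr hps, Equiv.swap_apply_left,
      Equiv.swap_apply_of_ne_of_ne hqr hqs]
  rcases eq_or_ne t q with rfl | htq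
  · rw [Equiv.swap_apply_of_ne_of_ne hqr hqs, Equiv.swap_apply_right,
      Equiv.swap_apply_of_ne_of_ne hpr hps]
  rw [Equiv.swap_apply_of_ne_of_ne htp htq]
  rcases eq_or_ne t r with rfl | htr
  · rw [Equiv.swap_apply_left]
    exact Equiv.swap_apply_of_ne_of_ne (Ne.symm hps) (Ne.symm hqs)
  rcases eq_or_ne t s with rfl | hts
  · rw [Equiv.swap_apply_right]
    exact Equiv.swap_apply_of_ne_of_ne (Ne.symm hpr) (Ne.symm hqr)
  rw [Equiv.swap_apply_of_ne_of_ne htr hts, Equiv.swap_apply_of_ne_of_ne htp htq]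

/-- flipping an edge of `u` commutes with `u` -/
lemma edge_flip_comm {u : Equiv.Perm (Fin n)} (hu2 : u ^ 2 = 1) (p : Fin n) :
    Equiv.swap p (u p) * u = u * Equiv.swap p (u p) := by
  have h : u * Equiv.swap p (u p) * u⁻¹ = Equiv.swap p (u p) := by
    rw [swap_conj, sq_apply hu2, Equiv.swap_comm]
  calc Equiv.swap p (u p) * u = (u * Equiv.swap p (u p) * u⁻¹) * u := by rw [h]
    _ = u * Equiv.swap p (u p) := by group

lemma comm_conj {u h : Equiv.Perm (Fin n)} (hc : h * u = u * h) : h * u * h⁻¹ = u := by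
  rw [hc]; group

/-- moving one edge of `u` onto another -/
def edgeMove (u : Equiv.Perm (Fin n)) (p q : Fin n) : Equiv.Perm (Fin n) :=
  if q = p then 1
  else if q = u p then Equiv.swap p q
  else Equiv.swap p q * Equiv.swap (u p) (u q)

lemma edgeMove_comm {u : Equiv.Perm (Fin n)} (hu2 : u ^ 2 = 1) (hf : ∀ t, u t ≠ t)
    (p q : Fin n) : edgeMove u p q * u = u * edgeMove u p q := by
  unfold edgeMove
  split
  · simp
  next h1 =>
  split
  next h2 => rw [h2]; exact edge_flip_comm hu2 p
  next h2 =>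
    have hpq : p ≠ u q := fun h => h2 (by rw [h, sq_apply hu2])
    have key : u * (Equiv.swap p q * Equiv.swap (u p) (u q)) * u⁻¹
        = Equiv.swap p q * Equiv.swap (u p) (u q) := by
      have : u * (Equiv.swap p q * Equiv.swap (u p) (u q)) * u⁻¹
          = (u * Equiv.swap p q * u⁻¹) * (u * Equiv.swap (u p) (u q) * u⁻¹) := by group
      rw [this, swap_conj, swap_conj, sq_apply hu2, sq_apply hu2]
      exact swap_swap_comm (hf p) (Ne.symm h2) (Ne.symm hpq) (hf q)
    calc Equiv.swap p q * Equiv.swap (u p) (u q) * u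
        = u * (Equiv.swap p q * Equiv.swap (u p) (u q)) * u⁻¹ * u := by rw [key]
      _ = _ := by group

lemma edgeMove_apply {u : Equiv.Perm (Fin n)} (hu2 : u ^ 2 = 1) (hf : ∀ t, u t ≠ t)
    (p q : Fin n) : edgeMove u p q p = q := by
  unfold edgeMove
  split
  next h => simp [h]
  next h1 =>
  split
  · simp
  next h2 =>
    have hpq : p ≠ u q := fun h => h2 (by rw [h, sq_apply hu2])
    rw [Equiv.Perm.mul_apply, Equiv.swap_apply_of_ne_of_ne (Ne.symm (hf p)) hpq,
      Equiv.swap_apply_left]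

lemma edgeMove_fix {u : Equiv.Perm (Fin n)} {p q r : Fin n}
    (h1 : r ≠ p) (h2 : r ≠ q) (h3 : r ≠ u p) (h4 : r ≠ u q) : edgeMove u p q r = r := by
  unfold edgeMove
  split
  · rfl
  split
  · exact Equiv.swap_apply_of_ne_of_ne h1 h2
  rw [Equiv.Perm.mul_apply, Equiv.swap_apply_of_ne_of_ne h3 h4,
    Equiv.swap_apply_of_ne_of_ne h1 h2]

lemma card_le_four (a b c d : Fin n) : ({a, b, c, d} : Finset (Fin n)).card ≤ 4 := by
  refine le_trans (Finset.card_insert_le _ _) ?_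
  refine le_trans (Nat.succ_le_succ (Finset.card_insert_le _ _)) ?_
  refine le_trans (Nat.succ_le_succ (Nat.succ_le_succ (Finset.card_insert_le _ _))) ?_
  simp

lemma card_le_eight (a b c d e f g h : Fin n) :
    ({a, b, c, d, e, f, g, h} : Finset (Fin n)).card ≤ 8 := by
  refine le_trans (Finset.card_insert_le _ _) (Nat.succ_le_succ ?_)
  refine le_trans (Finset.card_insert_le _ _) (Nat.succ_le_succ ?_)
  refine le_trans (Finset.card_insert_le _ _) (Nat.succ_le_succ ?_)
  refine le_trans (Finset.card_insert_le _ _) (Nat.succ_le_succ ?_)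
  exact card_le_four _ _ _ _

lemma exists_not_mem {s : Finset (Fin n)} (hn : 12 ≤ n) (hs : s.card ≤ 8) :
    ∃ e, e ∉ s := by
  by_contra hc
  push_neg at hc
  have : (Finset.univ : Finset (Fin n)).card ≤ s.card :=
    Finset.card_le_card fun t _ => hc t
  rw [Finset.card_univ, Fintype.card_fin] at this
  omega


lemma support_univ {x : Equiv.Perm (Fin n)} (hxf : ∀ p, x p ≠ p) :
    x.support = Finset.univ := by
  ext p; simp [Equiv.Perm.mem_support, hxf p]

lemma cycleType_fpf {x : Equiv.Perm (Fin n)} (hx2 : x ^ 2 = 1) (hxf : ∀ p, x p ≠ p) :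
    x.cycleType = Multiset.replicate x.cycleType.card 2 ∧ 2 * x.cycleType.card = n := by
  have hall : ∀ r ∈ x.cycleType, r = 2 := by
    intro r hr
    have h2 : 2 ≤ r := Equiv.Perm.two_le_of_mem_cycleType hr
    have hd : r ∣ orderOf x := by
      rw [← Equiv.Perm.lcm_cycleType]
      exact Multiset.dvd_lcm hr
    have ho : orderOf x ∣ 2 := orderOf_dvd_of_pow_eq_one hx2
    have h3 : r ∣ 2 := hd.trans ho
    have := Nat.le_of_dvd (by norm_num) h3
    omega
  constructor
  · exact (Multiset.eq_replicate_card).mpr hall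
  · have hsum : x.cycleType.sum = n := by
      rw [Equiv.Perm.sum_cycleType, support_univ hxf, Finset.card_univ, Fintype.card_fin]
    have : x.cycleType.sum = 2 * x.cycleType.card := by
      conv_lhs => rw [(Multiset.eq_replicate_card).mpr hall]
      rw [Multiset.sum_replicate, smul_eq_mul, mul_comm]
    omega

lemma conj_even (hn : 12 ≤ n) {x y : Equiv.Perm (Fin n)}
    (hx2 : x ^ 2 = 1) (hxf : ∀ p, x p ≠ p) (hy2 : y ^ 2 = 1) (hyf : ∀ p, y p ≠ p) :
    ∃ g ∈ alternatingGroup (Fin n), g * x * g⁻¹ = y := by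
  obtain ⟨hxr, hxc⟩ := cycleType_fpf hx2 hxf
  obtain ⟨hyr, hyc⟩ := cycleType_fpf hy2 hyf
  have hct : x.cycleType = y.cycleType := by
    rw [hxr, hyr]
    congr 1
    omega
  obtain ⟨g, hg⟩ := isConj_iff.mp (Equiv.Perm.isConj_of_cycleType_eq hct)
  rcases Int.units_eq_one_or (Equiv.Perm.sign g) with hs | hs
  · exact ⟨g, Equiv.Perm.mem_alternatingGroup.mpr hs, hg⟩
  · have hn0 : 0 < n := by omega
    set p : Fin n := ⟨0, hn0⟩
    set s := Equiv.swap p (x p) with hsdef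
    refine ⟨g * s, ?_, ?_⟩
    · rw [Equiv.Perm.mem_alternatingGroup, map_mul, hs, hsdef,
        Equiv.Perm.sign_swap (Ne.symm (hxf p))]
      rfl
    · have hcomm : s * x * s⁻¹ = x := comm_conj (edge_flip_comm hx2 p)
      calc g * s * x * (g * s)⁻¹ = g * (s * x * s⁻¹) * g⁻¹ := by group
        _ = y := by rw [hcomm, hg]


lemma Dset_conj (g x y : Equiv.Perm (Fin n)) :
    Dset (g * x * g⁻¹) (g * y * g⁻¹) = (Dset x y).image g := by
  ext p
  simp only [mem_Dset, Finset.mem_image, FPFPrim.conj_apply]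
  constructor
  · intro h
    exact ⟨g⁻¹ p, fun hq => h (by rw [hq]), by simp⟩
  · rintro ⟨q, hq, rfl⟩
    simp only [Equiv.Perm.inv_def, Equiv.symm_apply_apply]
    exact fun h => hq (g.injective h)

lemma card_Dset_conj (g x y : Equiv.Perm (Fin n)) :
    (Dset (g * x * g⁻¹) (g * y * g⁻¹)).card = (Dset x y).card := by
  rw [Dset_conj, Finset.card_image_of_injective _ g.injective]

lemma Dset_eq_abcd {u w : Equiv.Perm (Fin n)} (hu2 : u ^ 2 = 1) (huf : ∀ p, u p ≠ p)
    (hw2 : w ^ 2 = 1) (hwf : ∀ p, w p ≠ p) (hcard : (Dset u w).card ≤ 4)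
    {a : Fin n} (ha : a ∈ Dset u w) :
    Dset u w = {a, u a, w a, u (w a)} := by
  obtain ⟨⟨hb, hc, hd⟩, ⟨hba, hca, hcb⟩, hda, hdb, hdc⟩ := abcd hu2 huf hw2 hwf ha
  have hsub : ({a, u a, w a, u (w a)} : Finset (Fin n)) ⊆ Dset u w := by
    intro p hp
    simp only [Finset.mem_insert, Finset.mem_singleton] at hp
    rcases hp with rfl | rfl | rfl | rfl
    exacts [ha, hb, hc, hd]
  have h1 : a ∉ ({u a, w a, u (w a)} : Finset (Fin n)) := by
    simp only [Finset.mem_insert, Finset.mem_singleton]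
    push_neg
    exact ⟨Ne.symm hba, Ne.symm hca, Ne.symm hda⟩
  have h2 : u a ∉ ({w a, u (w a)} : Finset (Fin n)) := by
    simp only [Finset.mem_insert, Finset.mem_singleton]
    push_neg
    exact ⟨Ne.symm hcb, Ne.symm hdb⟩
  have h3 : w a ∉ ({u (w a)} : Finset (Fin n)) := by
    simpa using Ne.symm hdc
  have hc4 : ({a, u a, w a, u (w a)} : Finset (Fin n)).card = 4 := by
    rw [Finset.card_insert_of_notMem h1, Finset.card_insert_of_notMem h2,
      Finset.card_insert_of_notMem h3, Finset.card_singleton]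
  exact (Finset.eq_of_subset_of_card_le hsub (by omega)).symm

lemma wb_eq {u w : Equiv.Perm (Fin n)} (hu2 : u ^ 2 = 1) (huf : ∀ p, u p ≠ p)
    (hw2 : w ^ 2 = 1) (hwf : ∀ p, w p ≠ p) (hcard : (Dset u w).card ≤ 4)
    {a : Fin n} (ha : a ∈ Dset u w) : w (u a) = u (w a) := by
  obtain ⟨⟨hb, hc, hd⟩, ⟨hba, hca, hcb⟩, hda, hdb, hdc⟩ := abcd hu2 huf hw2 hwf ha
  have hwb : w (u a) ∈ Dset u w := apply_mem_Dset' hu2 hw2 hb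
  rw [Dset_eq_abcd hu2 huf hw2 hwf hcard ha] at hwb
  simp only [Finset.mem_insert, Finset.mem_singleton] at hwb
  rcases hwb with h | h | h | h
  · exfalso
    have := congrArg w h
    rw [sq_apply hw2] at this
    exact hcb this.symm
  · exact absurd h (hwf _)
  · exact absurd (w.injective h) hba
  · exact h

/-- a pair at distance 4 is a rewiring: `w = (u a, w a) ∘ u ∘ (u a, w a)` -/
lemma rewire {u w : Equiv.Perm (Fin n)} (hu2 : u ^ 2 = 1) (huf : ∀ p, u p ≠ p)
    (hw2 : w ^ 2 = 1) (hwf : ∀ p, w p ≠ p) (hcard : (Dset u w).card ≤ 4)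
    {a : Fin n} (ha : a ∈ Dset u w) :
    w = Equiv.swap (u a) (w a) * u * Equiv.swap (u a) (w a) := by
  obtain ⟨⟨hb, hc, hd⟩, ⟨hba, hca, hcb⟩, hda, hdb, hdc⟩ := abcd hu2 huf hw2 hwf ha
  have hDeq := Dset_eq_abcd hu2 huf hw2 hwf hcard ha
  have hwb : w (u a) = u (w a) := wb_eq hu2 huf hw2 hwf hcard ha
  have hub : u (u a) = a := sq_apply hu2 a
  have hwc : w (w a) = a := sq_apply hw2 a
  have hud : u (u (w a)) = w a := sq_apply hu2 (w a)
  have hwd : w (u (w a)) = u a := by rw [← hwb, sq_apply hw2]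
  refine Equiv.ext fun p => ?_
  simp only [Equiv.Perm.mul_apply]
  by_cases hp : p ∈ Dset u w
  · rw [hDeq] at hp
    simp only [Finset.mem_insert, Finset.mem_singleton] at hp
    rcases hp with rfl | rfl | rfl | rfl
    · rw [Equiv.swap_apply_of_ne_of_ne (Ne.symm hba) (Ne.symm hca),
        Equiv.swap_apply_left]
    · rw [Equiv.swap_apply_left, Equiv.swap_apply_of_ne_of_ne hdb hdc, hwb]
    · rw [Equiv.swap_apply_right, hub,
        Equiv.swap_apply_of_ne_of_ne (Ne.symm hba) (Ne.symm hca), hwc]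
    · rw [Equiv.swap_apply_of_ne_of_ne hdb hdc, hud, Equiv.swap_apply_right, hwd]
  · have hup : u p = w p := not_mem_Dset.mp hp
    have hpb : p ≠ u a := fun h => hp (h ▸ hb)
    have hpc : p ≠ w a := fun h => hp (h ▸ hc)
    rw [Equiv.swap_apply_of_ne_of_ne hpb hpc]
    have h1 : u p ≠ u a := fun h => hp ((u.injective h) ▸ ha)
    have h2 : u p ≠ w a := by
      intro h
      have := congrArg u h
      rw [sq_apply hu2] at this
      exact hp (this ▸ hd)
    rw [Equiv.swap_apply_of_ne_of_ne h1 h2, hup]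


/-- transitivity of the stabilizer of `u` in `A_n` on distance-4 neighbours of `u` -/
lemma nbr_trans (hn : 12 ≤ n) {u y1 w : Equiv.Perm (Fin n)}
    (hu2 : u ^ 2 = 1) (huf : ∀ p, u p ≠ p) (hy2 : y1 ^ 2 = 1) (hyf : ∀ p, y1 p ≠ p)
    (hw2 : w ^ 2 = 1) (hwf : ∀ p, w p ≠ p)
    (hny : u ≠ y1) (hcy : (Dset u y1).card ≤ 4)
    (hnw : u ≠ w) (hcw : (Dset u w).card ≤ 4) :
    ∃ h ∈ alternatingGroup (Fin n), h * u * h⁻¹ = u ∧ h * y1 * h⁻¹ = w := by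
  obtain ⟨a, ha⟩ := exists_mem_Dset hny
  obtain ⟨a', ha'⟩ := exists_mem_Dset hnw
  have hrw1 := rewire hu2 huf hy2 hyf hcy ha
  have hrw2 := rewire hu2 huf hw2 hwf hcw ha'
  have hbc : u a ≠ y1 a := mem_Dset.mp ha
  have hubc : u (u a) ≠ y1 a := by rw [sq_apply hu2]; exact Ne.symm (hyf a)
  have hb'c' : u a' ≠ w a' := mem_Dset.mp ha'
  have hub'c' : u (u a') ≠ w a' := by rw [sq_apply hu2]; exact Ne.symm (hwf a')
  set b := u a with hbd
  set c := y1 a with hcd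
  set b' := u a' with hb'd
  set c' := w a' with hc'd
  obtain ⟨h, hsg, hcm, hhb, hhc⟩ :
      ∃ h : Equiv.Perm (Fin n),
        Equiv.Perm.sign h = 1 ∧ h * u = u * h ∧ h b = b' ∧ h c = c' := by
    set s1 := edgeMove u b b' with hs1d
    have hs1comm : s1 * u = u * s1 := edgeMove_comm hu2 huf b b'
    have hs1b : s1 b = b' := edgeMove_apply hu2 huf b b'
    set s2 := edgeMove u (s1 c) c' with hs2d
    have hs2comm : s2 * u = u * s2 := edgeMove_comm hu2 huf (s1 c) c'
    have k1 : b' ≠ s1 c := fun h => hbc (s1.injective (hs1b.trans h))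
    have hcomm_app : u (s1 c) = s1 (u c) := by
      have := congrArg (fun z : Equiv.Perm (Fin n) => z c) hs1comm
      simpa [Equiv.Perm.mul_apply] using this.symm
    have k3 : b' ≠ u (s1 c) := by
      intro h
      rw [hcomm_app] at h
      have : b = u c := s1.injective (hs1b.trans h)
      apply hubc
      rw [this, sq_apply hu2]
    have k4 : b' ≠ u c' := by
      intro h
      apply hub'c'
      rw [h, sq_apply hu2]
    have hs2fix : s2 b' = b' := edgeMove_fix k1 hb'c' k3 k4
    have hs2c : s2 (s1 c) = c' := edgeMove_apply hu2 huf (s1 c) c'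
    have h0comm : (s2 * s1) * u = u * (s2 * s1) := by
      rw [mul_assoc, hs1comm, ← mul_assoc, hs2comm, mul_assoc]
    have h0b : (s2 * s1) b = b' := by
      rw [Equiv.Perm.mul_apply, hs1b, hs2fix]
    have h0c : (s2 * s1) c = c' := by
      rw [Equiv.Perm.mul_apply, hs2c]
    rcases Int.units_eq_one_or (Equiv.Perm.sign (s2 * s1)) with hs | hs
    · exact ⟨s2 * s1, hs, h0comm, h0b, h0c⟩
    · obtain ⟨e, he⟩ := exists_not_mem hn
        ((card_le_four b' c' (u b') (u c')).trans (by norm_num))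
      simp only [Finset.mem_insert, Finset.mem_singleton] at he
      push_neg at he
      obtain ⟨he1, he2, he3, he4⟩ := he
      refine ⟨Equiv.swap e (u e) * (s2 * s1), ?_, ?_, ?_, ?_⟩
      · rw [map_mul, hs, Equiv.Perm.sign_swap (Ne.symm (huf e))]
        rfl
      · rw [mul_assoc, h0comm, ← mul_assoc, edge_flip_comm hu2 e, mul_assoc]
      · rw [Equiv.Perm.mul_apply, h0b]
        refine Equiv.swap_apply_of_ne_of_ne (Ne.symm he1) ?_
        intro h
        apply he3
        rw [h, sq_apply hu2]
      · rw [Equiv.Perm.mul_apply, h0c]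
        refine Equiv.swap_apply_of_ne_of_ne (Ne.symm he2) ?_
        intro h
        apply he4
        rw [h, sq_apply hu2]
  refine ⟨h, Equiv.Perm.mem_alternatingGroup.mpr hsg, comm_conj hcm, ?_⟩
  rw [hrw1]
  have hexp : h * (Equiv.swap b c * u * Equiv.swap b c) * h⁻¹
      = (h * Equiv.swap b c * h⁻¹) * (h * u * h⁻¹) * (h * Equiv.swap b c * h⁻¹) := by
    group
  rw [hexp, swap_conj, hhb, hhc, comm_conj hcm]
  exact hrw2.symm


lemma conj_ne {g a b : Equiv.Perm (Fin n)} (h : a ≠ b) :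
    g * a * g⁻¹ ≠ g * b * g⁻¹ :=
  fun hc => h (mul_left_cancel (mul_right_cancel hc))

lemma comm_of_conj {x g : Equiv.Perm (Fin n)} (h : x * g * x⁻¹ = g) : g * x = x * g := by
  calc g * x = (x * g * x⁻¹) * x := by rw [h]
    _ = x * g := by group

end FPFPrim

/-- The conjugation action of a subgroup `H ≤ G` on a subset `C ⊆ G` (closed under
conjugation by elements of `H`) is *primitive*: it is transitive, and every
equivalence relation on `C` invariant under conjugation by elements of `H` is either
the equality relation or the full relation. -/
def IsPrimitiveConjActionOf {G : Type*} [Group G] (H : Subgroup G) (C : Set G) : Prop :=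
  (∀ x ∈ C, ∀ y ∈ C, ∃ g ∈ H, g * x * g⁻¹ = y) ∧
  ∀ r : G → G → Prop,
    (∀ x ∈ C, r x x) →
    (∀ x ∈ C, ∀ y ∈ C, r x y → r y x) →
    (∀ x ∈ C, ∀ y ∈ C, ∀ z ∈ C, r x y → r y z → r x z) →
    (∀ g ∈ H, ∀ x ∈ C, ∀ y ∈ C, r x y → r (g * x * g⁻¹) (g * y * g⁻¹)) →
    (∀ x ∈ C, ∀ y ∈ C, (r x y ↔ x = y)) ∨ (∀ x ∈ C, ∀ y ∈ C, r x y)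

open FPFPrim in
/-- For `n ≥ 12` with `4 ∣ n`, the conjugation action of the alternating group `A_n`
on the set of fixed-point-free involutions of `Fin n` (all of which are even, and
which form a single conjugacy class of `A_n`) is primitive. -/
theorem primitive_fpf_involutions_alt (n : ℕ) (hn : 12 ≤ n) (hdvd : 4 ∣ n) :
    IsPrimitiveConjActionOf (alternatingGroup (Fin n))
      {σ : Equiv.Perm (Fin n) | σ ≠ 1 ∧ σ ^ 2 = 1 ∧ ∀ x : Fin n, σ x ≠ x} := by
  have hn0 : 0 < n := by omega
  constructor
  · rintro x ⟨-, hx2, hxf⟩ y ⟨-, hy2, hyf⟩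
    exact conj_even hn hx2 hxf hy2 hyf
  · intro r hrefl hsymm htrans hinv
    by_cases hex : ∃ x, x ∈ {σ : Equiv.Perm (Fin n) | σ ≠ 1 ∧ σ ^ 2 = 1 ∧ ∀ p : Fin n, σ p ≠ p}
        ∧ ∃ y, y ∈ {σ : Equiv.Perm (Fin n) | σ ≠ 1 ∧ σ ^ 2 = 1 ∧ ∀ p : Fin n, σ p ≠ p}
        ∧ x ≠ y ∧ r x y
    · right
      obtain ⟨x0, hx0, y0, hy0, hne0, hr0⟩ := hex
      have memS : ∀ (g z : Equiv.Perm (Fin n)),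
          z ∈ {σ : Equiv.Perm (Fin n) | σ ≠ 1 ∧ σ ^ 2 = 1 ∧ ∀ p : Fin n, σ p ≠ p} →
          g * z * g⁻¹ ∈ {σ : Equiv.Perm (Fin n) | σ ≠ 1 ∧ σ ^ 2 = 1 ∧ ∀ p : Fin n, σ p ≠ p} := by
        rintro g z ⟨-, hz2, hzf⟩
        exact ⟨ne_one_of_fpf hn0 (conj_fpf hzf), conj_sq hz2, conj_fpf hzf⟩
      have descent : ∀ k (x y : Equiv.Perm (Fin n)),
          x ∈ {σ : Equiv.Perm (Fin n) | σ ≠ 1 ∧ σ ^ 2 = 1 ∧ ∀ p : Fin n, σ p ≠ p} →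
          y ∈ {σ : Equiv.Perm (Fin n) | σ ≠ 1 ∧ σ ^ 2 = 1 ∧ ∀ p : Fin n, σ p ≠ p} →
          r x y → x ≠ y → (Dset x y).card = k →
          ∃ u, u ∈ {σ : Equiv.Perm (Fin n) | σ ≠ 1 ∧ σ ^ 2 = 1 ∧ ∀ p : Fin n, σ p ≠ p} ∧
          ∃ v, v ∈ {σ : Equiv.Perm (Fin n) | σ ≠ 1 ∧ σ ^ 2 = 1 ∧ ∀ p : Fin n, σ p ≠ p} ∧
          r u v ∧ u ≠ v ∧ (Dset u v).card ≤ 4 := by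
        intro k
        induction k using Nat.strong_induction_on with
        | _ k IH =>
        intro x y hx hy hr hne hk
        have hx2 : x ^ 2 = 1 := hx.2.1
        have hxf : ∀ p, x p ≠ p := hx.2.2
        have hy2 : y ^ 2 = 1 := hy.2.1
        have hyf : ∀ p, y p ≠ p := hy.2.2
        by_cases hdone : (Dset x y).card ≤ 4
        · exact ⟨x, hx, y, hy, hr, hne, hdone⟩
        by_cases hcase : ∃ a ∈ Dset x y, y (x a) ≠ x (y a)
        · -- non-commuting move: jump straight to a distance-4 pair
          obtain ⟨a, ha, hybd⟩ := hcase
          obtain ⟨⟨hbD, hcD, hdD⟩, ⟨hba, hca, hcb⟩, hda, hdb, hdc⟩ := abcd hx2 hxf hy2 hyf ha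
          have hy'S := memS (Equiv.swap a (y a) * Equiv.swap (x a) (x (y a))) y hy
          set g := Equiv.swap a (y a) * Equiv.swap (x a) (x (y a)) with hgd
          have hsign : Equiv.Perm.sign g = 1 := by
            rw [hgd, map_mul, Equiv.Perm.sign_swap (Ne.symm hca),
              Equiv.Perm.sign_swap (Ne.symm hdb)]
            rfl
          have hgalt : g ∈ alternatingGroup (Fin n) := Equiv.Perm.mem_alternatingGroup.mpr hsign
          have hconj : x * g * x⁻¹ = g := by
            rw [hgd]
            have hexp : x * (Equiv.swap a (y a) * Equiv.swap (x a) (x (y a))) * x⁻¹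
                = (x * Equiv.swap a (y a) * x⁻¹) * (x * Equiv.swap (x a) (x (y a)) * x⁻¹) := by
              group
            rw [hexp, swap_conj, swap_conj, sq_apply hx2, sq_apply hx2]
            exact swap_swap_comm hba (Ne.symm hcb) hda hdc
          have hcomm : g * x = x * g := comm_of_conj hconj
          have hgconjx : g * x * g⁻¹ = x := comm_conj hcomm
          set y' := g * y * g⁻¹ with hy'd
          have hrxy' : r x y' := by
            have := hinv g hgalt x hx y hy hr
            rwa [hgconjx] at this
          have hryy' : r y y' := htrans y hy x hx y' hy'S (hsymm x hx y hy hr) hrxy'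
          have hyba : y (x a) ≠ a := by
            intro h
            apply hcb
            have := congrArg y h
            rw [sq_apply hy2] at this
            exact this.symm
          have hybb : y (x a) ≠ x a := hyf (x a)
          have hybc : y (x a) ≠ y a := fun h => hba (y.injective h)
          have hkey : y' (y (x a)) = x (y a) := by
            simp only [hy'd, FPFPrim.conj_apply, hgd, mul_inv_rev, Equiv.swap_inv,
              Equiv.Perm.mul_apply]
            rw [Equiv.swap_apply_of_ne_of_ne hyba hybc,
              Equiv.swap_apply_of_ne_of_ne hybb hybd, sq_apply hy2,
              Equiv.swap_apply_left, Equiv.swap_apply_of_ne_of_ne hda hdc]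
          have hneyy' : y ≠ y' := by
            intro h
            apply hdb
            rw [← hkey, ← h, sq_apply hy2]
          have hsub : Dset y y' ⊆ {x a, x (y a), y (x a), y (x (y a))} := by
            intro p hp
            simp only [Finset.mem_insert, Finset.mem_singleton]
            by_contra hnp
            push_neg at hnp
            obtain ⟨hp1, hp2, hp3, hp4⟩ := hnp
            apply mem_Dset.mp hp
            simp only [hy'd, FPFPrim.conj_apply, hgd, mul_inv_rev, Equiv.swap_inv,
              Equiv.Perm.mul_apply]
            by_cases hpa : p = a
            · subst hpa
              rw [Equiv.swap_apply_left,
                Equiv.swap_apply_of_ne_of_ne hcb (Ne.symm hdc), sq_apply hy2,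
                Equiv.swap_apply_of_ne_of_ne (Ne.symm hba) (Ne.symm hda),
                Equiv.swap_apply_left]
            · by_cases hpc : p = y a
              · subst hpc
                rw [Equiv.swap_apply_right,
                  Equiv.swap_apply_of_ne_of_ne (Ne.symm hba) (Ne.symm hda),
                  Equiv.swap_apply_of_ne_of_ne hcb (Ne.symm hdc),
                  Equiv.swap_apply_right, sq_apply hy2]
              · have hyp1 : y p ≠ a := by
                  intro h
                  apply hpc
                  have := congrArg y h
                  rwa [sq_apply hy2] at this
                have hyp2 : y p ≠ y a := fun h => hpa (y.injective h)
                have hyp3 : y p ≠ x a := by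
                  intro h
                  apply hp3
                  have := congrArg y h
                  rwa [sq_apply hy2] at this
                have hyp4 : y p ≠ x (y a) := by
                  intro h
                  apply hp4
                  have := congrArg y h
                  rwa [sq_apply hy2] at this
                rw [Equiv.swap_apply_of_ne_of_ne hpa hpc,
                  Equiv.swap_apply_of_ne_of_ne hp1 hp2,
                  Equiv.swap_apply_of_ne_of_ne hyp3 hyp4,
                  Equiv.swap_apply_of_ne_of_ne hyp1 hyp2]
          exact ⟨y, hy, y', hy'S, hryy', hneyy',
            (Finset.card_le_card hsub).trans (card_le_four _ _ _ _)⟩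
        · -- commuting case
          push_neg at hcase
          obtain ⟨a, ha⟩ := exists_mem_Dset hne
          obtain ⟨⟨hbD, hcD, hdD⟩, ⟨hba, hca, hcb⟩, hda, hdb, hdc⟩ := abcd hx2 hxf hy2 hyf ha
          have hyb : y (x a) = x (y a) := hcase a ha
          by_cases hout : ∃ e, e ∉ Dset x y
          · -- there is a common edge outside the disagreement set
            obtain ⟨e, he⟩ := hout
            have hef : x e = y e := not_mem_Dset.mp he
            have hfD : x e ∉ Dset x y := by
              intro h
              apply he
              have := apply_mem_Dset hx2 hy2 h
              rwa [sq_apply hx2] at this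
            have h1 : y (x e) = e := by
              rw [← (not_mem_Dset.mp hfD), sq_apply hx2]
            have hea : e ≠ a := fun h => he (by rw [h]; exact ha)
            have heb : e ≠ x a := fun h => he (by rw [h]; exact hbD)
            have hec : e ≠ y a := fun h => he (by rw [h]; exact hcD)
            have hed : e ≠ x (y a) := fun h => he (by rw [h]; exact hdD)
            have hfa : x e ≠ a := fun h => hfD (by rw [h]; exact ha)
            have hfb : x e ≠ x a := fun h => hfD (by rw [h]; exact hbD)
            have hfc : x e ≠ y a := fun h => hfD (by rw [h]; exact hcD)
            have hfd2 : x e ≠ x (y a) := fun h => hfD (by rw [h]; exact hdD)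
            have hy'S := memS (Equiv.swap a (x a) * Equiv.swap e (x e)) y hy
            set g := Equiv.swap a (x a) * Equiv.swap e (x e) with hgd
            have hsign : Equiv.Perm.sign g = 1 := by
              rw [hgd, map_mul, Equiv.Perm.sign_swap (Ne.symm (hxf a)),
                Equiv.Perm.sign_swap (Ne.symm (hxf e))]
              rfl
            have hgalt : g ∈ alternatingGroup (Fin n) :=
              Equiv.Perm.mem_alternatingGroup.mpr hsign
            have hcomm : g * x = x * g := by
              rw [hgd, mul_assoc, edge_flip_comm hx2 e, ← mul_assoc, edge_flip_comm hx2 a,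
                mul_assoc]
            have hgconjx : g * x * g⁻¹ = x := comm_conj hcomm
            set y' := g * y * g⁻¹ with hy'd
            have hrxy' : r x y' := by
              have := hinv g hgalt x hx y hy hr
              rwa [hgconjx] at this
            have hryy' : r y y' := htrans y hy x hx y' hy'S (hsymm x hx y hy hr) hrxy'
            have hy'a : y' a = x (y a) := by
              simp only [hy'd, FPFPrim.conj_apply, hgd, mul_inv_rev, Equiv.swap_inv,
                Equiv.Perm.mul_apply]
              rw [Equiv.swap_apply_left,
                Equiv.swap_apply_of_ne_of_ne (Ne.symm heb) (Ne.symm hfb), hyb,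
                Equiv.swap_apply_of_ne_of_ne (Ne.symm hed) (Ne.symm hfd2),
                Equiv.swap_apply_of_ne_of_ne hda hdb]
            have hneyy' : y ≠ y' := by
              intro h
              apply hdc
              rw [← hy'a, ← h]
            have hsub : Dset y y' ⊆ {a, x a, y a, x (y a)} := by
              intro p hp
              simp only [Finset.mem_insert, Finset.mem_singleton]
              by_contra hnp
              push_neg at hnp
              obtain ⟨hp1, hp2, hp3, hp4⟩ := hnp
              apply mem_Dset.mp hp
              simp only [hy'd, FPFPrim.conj_apply, hgd, mul_inv_rev, Equiv.swap_inv,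
                Equiv.Perm.mul_apply]
              by_cases hpe : p = e
              · subst hpe
                rw [Equiv.swap_apply_of_ne_of_ne hea heb, Equiv.swap_apply_left, h1,
                  Equiv.swap_apply_left, Equiv.swap_apply_of_ne_of_ne hfa hfb, ← hef]
              · by_cases hpf : p = x e
                · subst hpf
                  rw [Equiv.swap_apply_of_ne_of_ne hfa hfb, Equiv.swap_apply_right,
                    ← hef, Equiv.swap_apply_right,
                    Equiv.swap_apply_of_ne_of_ne hea heb, h1]
                · have hyp1 : y p ≠ a := by
                    intro h
                    apply hp3
                    have := congrArg y h
                    rwa [sq_apply hy2] at this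
                  have hyp2 : y p ≠ x a := by
                    intro h
                    apply hp4
                    have := congrArg y h
                    rwa [sq_apply hy2, hyb] at this
                  have hyp3 : y p ≠ e := by
                    intro h
                    apply hpf
                    have := congrArg y h
                    rwa [sq_apply hy2, ← hef] at this
                  have hyp4 : y p ≠ x e := by
                    intro h
                    apply hpe
                    have := congrArg y h
                    rw [sq_apply hy2] at this
                    rw [this, h1]
                  rw [Equiv.swap_apply_of_ne_of_ne hp1 hp2,
                    Equiv.swap_apply_of_ne_of_ne hpe hpf,
                    Equiv.swap_apply_of_ne_of_ne hyp3 hyp4,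
                    Equiv.swap_apply_of_ne_of_ne hyp1 hyp2]
            exact ⟨y, hy, y', hy'S, hryy', hneyy',
              (Finset.card_le_card hsub).trans (card_le_four _ _ _ _)⟩
          · -- the disagreement set is everything
            push_neg at hout
            have hDn : (Dset x y).card = n := by
              rw [Finset.eq_univ_iff_forall.mpr hout, Finset.card_univ, Fintype.card_fin]
            obtain ⟨a2, ha2m⟩ := exists_not_mem hn
              ((card_le_four a (x a) (y a) (x (y a))).trans (by norm_num))
            simp only [Finset.mem_insert, Finset.mem_singleton] at ha2m
            push_neg at ha2m
            obtain ⟨h2a, h2b, h2c, h2d⟩ := ha2m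
            have ha2 : a2 ∈ Dset x y := hout a2
            have hyb2 : y (x a2) = x (y a2) := hcase a2 ha2
            have hy'S := memS (Equiv.swap a (x a) * Equiv.swap a2 (x a2)) y hy
            set g := Equiv.swap a (x a) * Equiv.swap a2 (x a2) with hgd
            have hsign : Equiv.Perm.sign g = 1 := by
              rw [hgd, map_mul, Equiv.Perm.sign_swap (Ne.symm (hxf a)),
                Equiv.Perm.sign_swap (Ne.symm (hxf a2))]
              rfl
            have hgalt : g ∈ alternatingGroup (Fin n) :=
              Equiv.Perm.mem_alternatingGroup.mpr hsign
            have hcomm : g * x = x * g := by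
              rw [hgd, mul_assoc, edge_flip_comm hx2 a2, ← mul_assoc, edge_flip_comm hx2 a,
                mul_assoc]
            have hgconjx : g * x * g⁻¹ = x := comm_conj hcomm
            set y' := g * y * g⁻¹ with hy'd
            have hrxy' : r x y' := by
              have := hinv g hgalt x hx y hy hr
              rwa [hgconjx] at this
            have hryy' : r y y' := htrans y hy x hx y' hy'S (hsymm x hx y hy hr) hrxy'
            have hxaa2 : x a ≠ a2 := Ne.symm h2b
            have hxaxa2 : x a ≠ x a2 := fun h => h2a (x.injective h).symm
            have hy'a : y' a = x (y a) := by
              simp only [hy'd, FPFPrim.conj_apply, hgd, mul_inv_rev, Equiv.swap_inv,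
                Equiv.Perm.mul_apply]
              rw [Equiv.swap_apply_left, Equiv.swap_apply_of_ne_of_ne hxaa2 hxaxa2, hyb,
                Equiv.swap_apply_of_ne_of_ne (Ne.symm h2d)
                  (fun h => h2c (x.injective h).symm),
                Equiv.swap_apply_of_ne_of_ne hda hdb]
            have hneyy' : y ≠ y' := by
              intro h
              apply hdc
              rw [← hy'a, ← h]
            have hsub : Dset y y' ⊆ {a, x a, y a, x (y a), a2, x a2, y a2, x (y a2)} := by
              intro p hp
              simp only [Finset.mem_insert, Finset.mem_singleton]
              by_contra hnp
              push_neg at hnp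
              obtain ⟨hq1, hq2, hq3, hq4, hq5, hq6, hq7, hq8⟩ := hnp
              apply mem_Dset.mp hp
              simp only [hy'd, FPFPrim.conj_apply, hgd, mul_inv_rev, Equiv.swap_inv,
                Equiv.Perm.mul_apply]
              have hyp1 : y p ≠ a := by
                intro h
                apply hq3
                have := congrArg y h
                rwa [sq_apply hy2] at this
              have hyp2 : y p ≠ x a := by
                intro h
                apply hq4
                have := congrArg y h
                rwa [sq_apply hy2, hyb] at this
              have hyp3 : y p ≠ a2 := by
                intro h
                apply hq7
                have := congrArg y h
                rwa [sq_apply hy2] at this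
              have hyp4 : y p ≠ x a2 := by
                intro h
                apply hq8
                have := congrArg y h
                rwa [sq_apply hy2, hyb2] at this
              rw [Equiv.swap_apply_of_ne_of_ne hq1 hq2,
                Equiv.swap_apply_of_ne_of_ne hq5 hq6,
                Equiv.swap_apply_of_ne_of_ne hyp3 hyp4,
                Equiv.swap_apply_of_ne_of_ne hyp1 hyp2]
            have hlt : (Dset y y').card < k := by
              have h8 := (Finset.card_le_card hsub).trans (card_le_eight _ _ _ _ _ _ _ _)
              omega
            exact IH _ hlt y y' hy hy'S hryy' hneyy' rfl

      obtain ⟨u0, hu0, v0, hv0, hruv, hnuv, hcuv⟩ := descent _ x0 y0 hx0 hy0 hr0 hne0 rfl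
      have adjrel : ∀ u, u ∈ {σ : Equiv.Perm (Fin n) | σ ≠ 1 ∧ σ ^ 2 = 1 ∧ ∀ p : Fin n, σ p ≠ p} →
          ∀ w, w ∈ {σ : Equiv.Perm (Fin n) | σ ≠ 1 ∧ σ ^ 2 = 1 ∧ ∀ p : Fin n, σ p ≠ p} →
          u ≠ w → (Dset u w).card ≤ 4 → r u w := by
        intro u hu w hw hnuw hcuw
        obtain ⟨g, hg, hgx⟩ := conj_even hn hu0.2.1 hu0.2.2 hu.2.1 hu.2.2
        have hy1S := memS g v0 hv0
        have hr1 : r u (g * v0 * g⁻¹) := by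
          have := hinv g hg u0 hu0 v0 hv0 hruv
          rwa [hgx] at this
        have hne1 : u ≠ g * v0 * g⁻¹ := by
          rw [← hgx]
          exact conj_ne hnuv
        have hc1 : (Dset u (g * v0 * g⁻¹)).card ≤ 4 := by
          conv_lhs => rw [← hgx]
          rw [card_Dset_conj]
          exact hcuv
        obtain ⟨h, hh, hhu, hhy⟩ := nbr_trans hn hu.2.1 hu.2.2 hy1S.2.1 hy1S.2.2
          hw.2.1 hw.2.2 hne1 hc1 hnuw hcuw
        have := hinv h hh u hu _ hy1S hr1
        rwa [hhu, hhy] at this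
      have full : ∀ k u, u ∈ {σ : Equiv.Perm (Fin n) | σ ≠ 1 ∧ σ ^ 2 = 1 ∧ ∀ p : Fin n, σ p ≠ p} →
          ∀ v, v ∈ {σ : Equiv.Perm (Fin n) | σ ≠ 1 ∧ σ ^ 2 = 1 ∧ ∀ p : Fin n, σ p ≠ p} →
          (Dset u v).card = k → r u v := by
        intro k
        induction k using Nat.strong_induction_on with
        | _ k IH =>
        intro u hu v hv hk
        by_cases huv : u = v
        · subst huv
          exact hrefl u hu
        obtain ⟨a, ha⟩ := exists_mem_Dset huv
        obtain ⟨⟨hbD, hcD, hdD⟩, ⟨hba, hca, hcb⟩, hda, hdb, hdc⟩ :=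
          abcd hu.2.1 hu.2.2 hv.2.1 hv.2.2 ha
        have hu'S := memS (Equiv.swap (u a) (v a)) u hu
        set t := Equiv.swap (u a) (v a) with htd
        set u' := t * u * t⁻¹ with hu'd
        have htinv : t⁻¹ = t := Equiv.swap_inv _ _
        have hta : t a = a := Equiv.swap_apply_of_ne_of_ne (Ne.symm hba) (Ne.symm hca)
        have hu'a : u' a = v a := by
          rw [hu'd, FPFPrim.conj_apply, htinv, hta, htd, Equiv.swap_apply_left]
        have hneu' : u ≠ u' := by
          intro h
          apply mem_Dset.mp ha
          rw [h, hu'a]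
        have hsub : Dset u u' ⊆ {a, u a, v a, u (v a)} := by
          intro p hp
          simp only [Finset.mem_insert, Finset.mem_singleton]
          by_contra hnp
          push_neg at hnp
          obtain ⟨hp1, hp2, hp3, hp4⟩ := hnp
          apply mem_Dset.mp hp
          rw [hu'd, FPFPrim.conj_apply, htinv]
          have htp : t p = p := Equiv.swap_apply_of_ne_of_ne hp2 hp3
          rw [htp]
          have h1 : u p ≠ u a := fun h => hp1 (u.injective h)
          have h2 : u p ≠ v a := by
            intro h
            apply hp4
            have := congrArg u h
            rwa [sq_apply hu.2.1] at this
          exact (Equiv.swap_apply_of_ne_of_ne h1 h2).symm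
        have hcard' : (Dset u u').card ≤ 4 :=
          (Finset.card_le_card hsub).trans (card_le_four _ _ _ _)
        have hru' : r u u' := adjrel u hu u' hu'S hneu' hcard'
        have hsub2 : Dset u' v ⊆ (Dset u v).erase a := by
          intro p hp
          rw [Finset.mem_erase]
          constructor
          · intro h
            subst h
            exact (mem_Dset.mp hp) hu'a
          · by_contra hpD
            apply mem_Dset.mp hp
            have hupvp : u p = v p := not_mem_Dset.mp hpD
            rw [hu'd, FPFPrim.conj_apply, htinv]
            have hpb : p ≠ u a := fun h => hpD (by rw [h]; exact hbD)
            have hpc : p ≠ v a := fun h => hpD (by rw [h]; exact hcD)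
            rw [show t p = p from Equiv.swap_apply_of_ne_of_ne hpb hpc]
            have h1 : u p ≠ u a := fun h => hpD (by rw [u.injective h]; exact ha)
            have h2 : u p ≠ v a := by
              intro h
              apply hpD
              have := congrArg u h
              rw [sq_apply hu.2.1] at this
              rw [this]
              exact hdD
            rw [show t (u p) = u p from Equiv.swap_apply_of_ne_of_ne h1 h2, hupvp]
        have hlt : (Dset u' v).card < k := by
          have h1 := Finset.card_le_card hsub2
          have h2 : ((Dset u v).erase a).card < (Dset u v).card :=
            Finset.card_erase_lt_of_mem ha
          omega
        exact htrans u hu u' hu'S v hv hru' (IH _ hlt u' hu'S v hv rfl)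
      intro x hx y hy
      exact full _ x hx y hy rfl
    · left
      intro x hx y hy
      constructor
      · intro hr
        by_contra hne
        exact hex ⟨x, hx, y, hy, hne, hr⟩
      · rintro rfl
        exact hrefl x hx
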